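/- Let K be a field of characteristic 0 and consider the Laurent polynomial Poisson algebra A° = K[X₁^{±1}, …, X_n^{±1}, Z₁^{±1}, …, Z_n^{±1}] with Poisson bracket satisfying {Z_j, Z_k} = 0, {Z_j, X_k} = -δ_{k ≤ j} c_{jk} Z_j X_k with all c_{jk} nonzero integers for k ≤ j, and {X_j, X_k} ∈ K[X₁,…,X_n]. Then A° has no nonzero proper Poisson ideals (it is Poisson simple). -/

import Mathlib

open AddMonoidAlgebra
open scoped Classical

/-- The Laurent polynomial algebra `K[X₁^{±1},…,X_n^{±1},Z₁^{±1},…,Z_n^{±1}]`,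
realized as the group algebra of `ℤ^n × ℤ^n` over `K`. -/
abbrev LaurentAlg (K : Type*) [CommRing K] (n : ℕ) :=
  AddMonoidAlgebra K ((Fin n → ℤ) × (Fin n → ℤ))

/-- The generator `X_j` of `LaurentAlg K n`. -/
noncomputable def Xgen {K : Type*} [CommRing K] {n : ℕ} (j : Fin n) : LaurentAlg K n :=
  AddMonoidAlgebra.single (Pi.single j 1, 0) 1

/-- The generator `Z_j` of `LaurentAlg K n`. -/
noncomputable def Zgen {K : Type*} [CommRing K] {n : ℕ} (j : Fin n) : LaurentAlg K n :=
  AddMonoidAlgebra.single (0, Pi.single j 1) 1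

/- ### Auxiliary lemmas -/

noncomputable def amfilter {K G : Type*} [Field K] (P : G → Prop) [DecidablePred P]
    (h : AddMonoidAlgebra K G) : AddMonoidAlgebra K G :=
  AddMonoidAlgebra.ofCoeff (Finsupp.filter P h.coeff)

lemma amfilter_apply {K G : Type*} [Field K] (P : G → Prop) [DecidablePred P]
    (h : AddMonoidAlgebra K G) (p : G) :
    (amfilter P h).coeff p = if P p then h.coeff p else 0 :=
  Finsupp.filter_apply ..

lemma amfilter_support {K G : Type*} [Field K] (P : G → Prop) [DecidablePred P]
    (h : AddMonoidAlgebra K G) :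
    (amfilter P h).coeff.support = h.coeff.support.filter P :=
  Finsupp.support_filter ..

abbrev Gn (n : ℕ) := (Fin n → ℤ) × (Fin n → ℤ)

lemma diag_apply' {K G : Type*} [Field K] [AddCommGroup G]
    (T : AddMonoidAlgebra K G → AddMonoidAlgebra K G)
    (hadd : ∀ x y, T (x + y) = T x + T y)
    (e : G → K) (h : AddMonoidAlgebra K G)
    (hdiag : ∀ p ∈ h.coeff.support, ∀ c : K, T (AddMonoidAlgebra.single p c)
      = e p • AddMonoidAlgebra.single p c)
    (q : G) : (T h).coeff q = e q * h.coeff q := by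
  classical
  set T' : AddMonoidAlgebra K G →+ AddMonoidAlgebra K G := AddMonoidHom.mk' T hadd with hT'
  have hsum : T h = ∑ p ∈ h.coeff.support, e p • AddMonoidAlgebra.single p (h.coeff p) := by
    have h1 : h = ∑ p ∈ h.coeff.support, AddMonoidAlgebra.single p (h.coeff p) := by
      conv_lhs => rw [← AddMonoidAlgebra.sum_coeff_single h]
      rfl
    calc T h = T' (∑ p ∈ h.coeff.support, AddMonoidAlgebra.single p (h.coeff p)) := by rw [← h1]; rfl
      _ = ∑ p ∈ h.coeff.support, T (AddMonoidAlgebra.single p (h.coeff p)) := by rw [map_sum]; rfl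
      _ = _ := Finset.sum_congr rfl fun p hp => hdiag p hp (h.coeff p)
  rw [hsum, AddMonoidAlgebra.coeff_sum, Finsupp.finset_sum_apply, Finset.sum_eq_single q]
  · simp [Finsupp.single_apply]
  · intro p hp hpq
    simp [Finsupp.single_apply, hpq]
  · intro hq
    have : h.coeff q = 0 := Finsupp.notMem_support_iff.mp hq
    simp [this]

lemma split_mem' {K G : Type*} [Field K] [AddCommGroup G]
    (I : Ideal (AddMonoidAlgebra K G))
    (T : AddMonoidAlgebra K G → AddMonoidAlgebra K G)
    (hadd : ∀ x y, T (x + y) = T x + T y)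
    (hI : ∀ a ∈ I, T a ∈ I) (e : G → K) :
    ∀ (N : ℕ) (h : AddMonoidAlgebra K G), h ∈ I →
      (h.coeff.support.image e).card ≤ N →
      (∀ p ∈ h.coeff.support, ∀ c : K, T (AddMonoidAlgebra.single p c)
        = e p • AddMonoidAlgebra.single p c) →
      ∀ v : K, amfilter (fun p => e p = v) h ∈ I := by
  intro N
  induction N with
  | zero =>
    intro h hh hcard hdiag v
    have hsupp : h.coeff.support = ∅ := by
      by_contra hne
      obtain ⟨p, hp⟩ := Finset.nonempty_iff_ne_empty.mpr hne
      have : e p ∈ h.coeff.support.image e := Finset.mem_image_of_mem e hp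
      have := Finset.card_pos.mpr ⟨e p, this⟩
      omega
    have h0 : h = 0 := AddMonoidAlgebra.coeff_eq_zero.mp (Finsupp.support_eq_empty.mp hsupp)
    have : amfilter (fun p => e p = v) h = 0 := by
      ext p; rw [amfilter_apply]; simp [h0]
    rw [this]; exact I.zero_mem
  | succ N ih =>
    intro h hh hcard hdiag v
    by_cases hall : ∀ p ∈ h.coeff.support, e p = v
    · have heq : amfilter (fun p => e p = v) h = h := by
        ext p
        rw [amfilter_apply]
        by_cases hp : e p = v
        · simp [hp]
        · have : h.coeff p = 0 := by
            by_contra h0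
            exact hp (hall p (Finsupp.mem_support_iff.mpr h0))
          simp [hp, this]
      rwa [heq]
    · push_neg at hall
      obtain ⟨p₁, hp₁s, hp₁v⟩ := hall
      set w := e p₁ with hw
      set h' := T h - w • h with hh'
      have ksmul : ∀ (a : K) (x : AddMonoidAlgebra K G), x ∈ I → a • x ∈ I :=
        fun a x hx => Submodule.smul_mem (I.restrictScalars K) a hx
      have h'I : h' ∈ I := sub_mem (hI h hh) (ksmul w h hh)
      have h'app : ∀ p, h'.coeff p = (e p - w) * h.coeff p := by
        intro p
        rw [hh', AddMonoidAlgebra.coeff_sub, Finsupp.sub_apply, AddMonoidAlgebra.coeff_smul, Finsupp.smul_apply, diag_apply' T hadd e h hdiag p,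
          smul_eq_mul]
        ring
      have h'supp : h'.coeff.support ⊆ h.coeff.support := by
        intro p hp
        rw [Finsupp.mem_support_iff] at hp ⊢
        intro h0; rw [h'app p, h0, mul_zero] at hp; exact hp rfl
      have himg : h'.coeff.support.image e ⊆ (h.coeff.support.image e).erase w := by
        intro x hx
        obtain ⟨p, hps, rfl⟩ := Finset.mem_image.mp hx
        refine Finset.mem_erase.mpr ⟨?_, Finset.mem_image_of_mem e (h'supp hps)⟩
        intro hew
        have := Finsupp.mem_support_iff.mp hps
        rw [h'app p, hew, sub_self, zero_mul] at this
        exact this rfl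
      have hcard' : (h'.coeff.support.image e).card ≤ N := by
        have h1 := Finset.card_le_card himg
        have h2 : ((h.coeff.support.image e).erase w).card = (h.coeff.support.image e).card - 1 :=
          Finset.card_erase_of_mem (Finset.mem_image_of_mem e hp₁s)
        have h3 : 0 < (h.coeff.support.image e).card :=
          Finset.card_pos.mpr ⟨w, Finset.mem_image_of_mem e hp₁s⟩
        omega
      have hdiag' : ∀ p ∈ h'.coeff.support, ∀ c : K, T (AddMonoidAlgebra.single p c)
          = e p • AddMonoidAlgebra.single p c := fun p hp => hdiag p (h'supp hp)
      have key := ih h' h'I hcard' hdiag' v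
      have hfe : amfilter (fun p => e p = v) h' =
          (v - w) • amfilter (fun p => e p = v) h := by
        ext p
        rw [AddMonoidAlgebra.coeff_smul, Finsupp.smul_apply, amfilter_apply, amfilter_apply]
        by_cases hp : e p = v
        · simp only [hp, if_pos]
          rw [h'app p, hp]
          rfl
        · simp [hp]
      have hvw : v - w ≠ 0 := sub_ne_zero.mpr (Ne.symm hp₁v)
      have : amfilter (fun p => e p = v) h
          = (v - w)⁻¹ • amfilter (fun p => e p = v) h' := by
        rw [hfe, smul_smul, inv_mul_cancel₀ hvw, one_smul]
      rw [this]
      exact ksmul _ _ key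

lemma multi_split' {K G ι : Type*} [Field K] [AddCommGroup G]
    (I : Ideal (AddMonoidAlgebra K G))
    (T : ι → AddMonoidAlgebra K G → AddMonoidAlgebra K G)
    (e : ι → G → K)
    (hadd : ∀ j x y, T j (x + y) = T j x + T j y)
    (hI : ∀ j, ∀ a ∈ I, T j a ∈ I) :
    ∀ (s : Finset ι) (h : AddMonoidAlgebra K G), h ∈ I →
      (∀ j ∈ s, ∀ p ∈ h.coeff.support, ∀ c : K, T j (AddMonoidAlgebra.single p c)
        = e j p • AddMonoidAlgebra.single p c) →
      ∀ p₀ : G, ∃ g : AddMonoidAlgebra K G, g ∈ I ∧ g.coeff.support ⊆ h.coeff.support ∧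
        g.coeff p₀ = h.coeff p₀ ∧ ∀ p ∈ g.coeff.support, ∀ j ∈ s, e j p = e j p₀ := by
  intro s
  induction s using Finset.induction_on with
  | empty =>
    intro h hh _ p₀
    exact ⟨h, hh, subset_rfl, rfl, by simp⟩
  | @insert a s ha ih =>
    intro h hh hdiag p₀
    obtain ⟨g, hgI, hgsupp, hgp₀, hge⟩ := ih h hh
      (fun j hj => hdiag j (Finset.mem_insert_of_mem hj)) p₀
    set g' := amfilter (fun p => e a p = e a p₀) g with hg'
    have hg'I : g' ∈ I := split_mem' I (T a) (hadd a) (hI a) (e a)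
      (g.coeff.support.image (e a)).card g hgI le_rfl
      (fun p hp => hdiag a (Finset.mem_insert_self a s) p (hgsupp hp)) (e a p₀)
    have hg'supp : g'.coeff.support ⊆ g.coeff.support := by
      rw [hg', amfilter_support]
      exact Finset.filter_subset _ _
    refine ⟨g', hg'I, hg'supp.trans hgsupp, ?_, ?_⟩
    · rw [hg', amfilter_apply, if_pos rfl, hgp₀]
    · intro p hp j hj
      rcases Finset.mem_insert.mp hj with rfl | hj'
      · have := hp
        rw [hg', amfilter_support, Finset.mem_filter] at this
        exact this.2
      · exact hge p (hg'supp hp) j hj'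

lemma pi_mem_gen {n : ℕ} (S : AddSubgroup (Fin n → ℤ))
    (hS : ∀ k, Pi.single k 1 ∈ S) (β : Fin n → ℤ) : β ∈ S := by
  have hβ : β = ∑ k, β k • Pi.single k 1 := by
    funext i
    rw [Finset.sum_apply]
    simp [Pi.single_apply, Finset.sum_ite_eq]
  rw [hβ]
  exact AddSubgroup.sum_mem S fun k _ => AddSubgroup.zsmul_mem S (hS k) _

lemma prod_mem_gen {n : ℕ} (S : AddSubgroup (Gn n))
    (hX : ∀ k, ((Pi.single k 1 : Fin n → ℤ), (0 : Fin n → ℤ)) ∈ S)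
    (hZ : ∀ k, ((0 : Fin n → ℤ), (Pi.single k 1 : Fin n → ℤ)) ∈ S)
    (p : Gn n) : p ∈ S := by
  have h1 : (p.1, (0 : Fin n → ℤ)) ∈ S :=
    pi_mem_gen (S.comap (AddMonoidHom.inl (Fin n → ℤ) (Fin n → ℤ))) (fun k => hX k) p.1
  have h2 : ((0 : Fin n → ℤ), p.2) ∈ S :=
    pi_mem_gen (S.comap (AddMonoidHom.inr (Fin n → ℤ) (Fin n → ℤ))) (fun k => hZ k) p.2
  have : p = (p.1, (0:Fin n → ℤ)) + ((0:Fin n → ℤ), p.2) := by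
    ext <;> simp
  rw [this]
  exact S.add_mem h1 h2

lemma tri_low {n : ℕ} (c : Fin n → Fin n → ℤ) (hc : ∀ j k : Fin n, k ≤ j → c j k ≠ 0)
    (d : Fin n → ℤ) (hd : ∀ j : Fin n, (∑ k, if k ≤ j then c j k * d k else 0) = 0) :
    ∀ j, d j = 0 := by
  suffices H : ∀ m : ℕ, ∀ j : Fin n, j.val < m → d j = 0 by
    exact fun j => H n j j.isLt
  intro m
  induction m with
  | zero => omega
  | succ m ih =>
    intro j hj
    have hsum := hd j
    rw [Finset.sum_eq_single j] at hsum
    · rw [if_pos le_rfl] at hsum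
      rcases mul_eq_zero.mp hsum with h | h
      · exact absurd h (hc j j le_rfl)
      · exact h
    · intro k _ hkj
      by_cases hk : k ≤ j
      · have hklt : k < j := lt_of_le_of_ne hk hkj
        have : d k = 0 := ih k (by omega)
        simp [hk, this]
      · simp [hk]
    · intro h; exact absurd (Finset.mem_univ j) h

lemma tri_up {n : ℕ} (c : Fin n → Fin n → ℤ) (hc : ∀ j k : Fin n, k ≤ j → c j k ≠ 0)
    (d : Fin n → ℤ) (hd : ∀ j : Fin n, (∑ k, if j ≤ k then c k j * d k else 0) = 0) :
    ∀ j, d j = 0 := by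
  suffices H : ∀ m : ℕ, ∀ j : Fin n, n - j.val ≤ m → d j = 0 by
    exact fun j => H n j (by omega)
  intro m
  induction m with
  | zero => intro j hj; have := j.isLt; omega
  | succ m ih =>
    intro j hj
    have hsum := hd j
    rw [Finset.sum_eq_single j] at hsum
    · rw [if_pos le_rfl] at hsum
      rcases mul_eq_zero.mp hsum with h | h
      · exact absurd h (hc j j le_rfl)
      · exact h
    · intro k _ hkj
      by_cases hk : j ≤ k
      · have hklt : j < k := lt_of_le_of_ne hk (Ne.symm hkj)
        have hkv := k.isLt
        have : d k = 0 := ih k (by omega)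
        simp [hk, this]
      · simp [hk]
    · intro h; exact absurd (Finset.mem_univ j) h

lemma single_neg' {K G : Type*} [Field K] [AddCommGroup G] (a : G) (b : K) :
    AddMonoidAlgebra.single a (-b) = -AddMonoidAlgebra.single a b := by
  have h := AddMonoidAlgebra.single_add (R := K) a (-b) b
  rw [neg_add_cancel, AddMonoidAlgebra.single_zero] at h
  exact eq_neg_of_add_eq_zero_left h.symm

lemma single_zero_mul_eq_smul {K G : Type*} [Field K] [AddCommGroup G] (a : K) (p : G) (cc : K) :
    AddMonoidAlgebra.single (0:G) a * AddMonoidAlgebra.single p cc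
      = a • AddMonoidAlgebra.single p cc := by
  rw [AddMonoidAlgebra.single_mul_single, AddMonoidAlgebra.smul_single', zero_add]

lemma single_zero_intCast {K G : Type*} [Field K] [AddCommGroup G] (m : ℤ) :
    (AddMonoidAlgebra.single (0:G) ((m : K)) : AddMonoidAlgebra K G)
      = (m : AddMonoidAlgebra K G) := by
  rw [← map_intCast (algebraMap K (AddMonoidAlgebra K G)) m, AddMonoidAlgebra.coe_algebraMap]
  simp

/- ### Eigenvalue functions -/

noncomputable def ezf {K : Type*} [Field K] {n : ℕ} (c : Fin n → Fin n → ℤ)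
    (j : Fin n) (p : Gn n) : K :=
  -(((∑ k, if k ≤ j then c j k * p.1 k else 0 : ℤ) : K))

noncomputable def exf {K : Type*} [Field K] {n : ℕ} (c : Fin n → Fin n → ℤ)
    (j : Fin n) (p : Gn n) : K :=
  (((∑ k, if j ≤ k then c k j * p.2 k else 0 : ℤ) : K))

section Eigen

variable {K : Type*} [Field K] {n : ℕ}
  (br : LaurentAlg K n → LaurentAlg K n → LaurentAlg K n)
  (c : Fin n → Fin n → ℤ)

lemma ezf_add (j : Fin n) (p q : Gn n) :
    ezf (K := K) c j (p + q) = ezf (K := K) c j p + ezf (K := K) c j q := by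
  unfold ezf
  have : (∑ k, if k ≤ j then c j k * (p + q).1 k else 0)
      = (∑ k, if k ≤ j then c j k * p.1 k else 0) + (∑ k, if k ≤ j then c j k * q.1 k else 0) := by
    rw [← Finset.sum_add_distrib]
    apply Finset.sum_congr rfl
    intro k _
    by_cases hk : k ≤ j
    · simp only [hk, if_pos, Prod.fst_add, Pi.add_apply]; ring
    · simp [hk]
  rw [this]
  push_cast
  ring

lemma ezf_neg (j : Fin n) (p : Gn n) :
    ezf (K := K) c j (-p) = -ezf (K := K) c j p := by
  have := ezf_add (K := K) c j p (-p)
  rw [add_neg_cancel] at this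
  have h0 : ezf (K := K) c j (0 : Gn n) = 0 := by
    unfold ezf; simp
  rw [h0] at this
  linear_combination -this

lemma exf_add (j : Fin n) (p q : Gn n) :
    exf (K := K) c j (p + q) = exf (K := K) c j p + exf (K := K) c j q := by
  unfold exf
  have : (∑ k, if j ≤ k then c k j * (p + q).2 k else 0)
      = (∑ k, if j ≤ k then c k j * p.2 k else 0) + (∑ k, if j ≤ k then c k j * q.2 k else 0) := by
    rw [← Finset.sum_add_distrib]
    apply Finset.sum_congr rfl
    intro k _
    by_cases hk : j ≤ k
    · simp only [hk, if_pos, Prod.snd_add, Pi.add_apply]; ring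
    · simp [hk]
  rw [this]
  push_cast
  ring

lemma exf_neg (j : Fin n) (p : Gn n) :
    exf (K := K) c j (-p) = -exf (K := K) c j p := by
  have := exf_add (K := K) c j p (-p)
  rw [add_neg_cancel] at this
  have h0 : exf (K := K) c j (0 : Gn n) = 0 := by
    unfold exf; simp
  rw [h0] at this
  linear_combination -this

variable (h_anti : ∀ x y, br x y = - br y x)
  (h_add : ∀ x y z, br (x + y) z = br x z + br y z)
  (h_smul : ∀ (a : K) (x y : LaurentAlg K n), br (a • x) y = a • br x y)
  (h_leibniz : ∀ x y z, br (x * y) z = x * br y z + y * br x z)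

include h_anti h_leibniz in
lemma br_one_right : ∀ x, br x 1 = 0 := by
  have h1 : ∀ z, br 1 z = 0 := by
    intro z
    have := h_leibniz 1 1 z
    rw [one_mul, one_mul] at this
    exact (left_eq_add.mp this)
  intro x
  rw [h_anti, h1, neg_zero]

include h_anti h_leibniz in
lemma leib2 : ∀ g x y, br g (x * y) = x * br g y + y * br g x := by
  intro g x y
  rw [h_anti g (x * y), h_leibniz x y g, h_anti y g, h_anti x g]
  ring

include h_anti h_add in
lemma br_add2 : ∀ x y z, br x (y + z) = br x y + br x z := by
  intro x y z
  rw [h_anti x (y + z), h_add, h_anti y x, h_anti z x]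
  ring

include h_anti h_smul in
lemma br_smul2 : ∀ (a : K) (x y : LaurentAlg K n), br x (a • y) = a • br x y := by
  intro a x y
  rw [h_anti x (a • y), h_smul, h_anti y x, smul_neg, neg_neg]

variable (hZZ : ∀ j k : Fin n, br (Zgen j) (Zgen k) = 0)
  (hZX : ∀ j k : Fin n, br (Zgen j) (Xgen k) =
    if k ≤ j then -(c j k : LaurentAlg K n) * (Zgen j * Xgen k) else 0)

include h_anti h_leibniz hZZ hZX in
lemma eigenZ : ∀ (j : Fin n) (p : Gn n),
    br (Zgen j) (AddMonoidAlgebra.single p 1)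
      = AddMonoidAlgebra.single (0 : Gn n) (ezf (K := K) c j p)
        * (Zgen j * AddMonoidAlgebra.single p 1) := by
  intro j
  have hL := leib2 br h_anti h_leibniz
  have h1 := br_one_right br h_anti h_leibniz
  set S : AddSubgroup (Gn n) :=
    { carrier := {p : Gn n | br (Zgen j) (AddMonoidAlgebra.single p 1)
        = AddMonoidAlgebra.single (0 : Gn n) (ezf (K := K) c j p)
          * (Zgen j * AddMonoidAlgebra.single p 1)}
      zero_mem' := by
        show br (Zgen j) (AddMonoidAlgebra.single (0 : Gn n) 1) = _
        rw [← AddMonoidAlgebra.one_def]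
        have : ezf (K := K) c j (0 : Gn n) = 0 := by unfold ezf; simp
        rw [this, h1 (Zgen j), AddMonoidAlgebra.single_zero, zero_mul]
      add_mem' := by
        intro p q hp hq
        show br (Zgen j) (AddMonoidAlgebra.single (p + q) 1) = _
        have hm : (AddMonoidAlgebra.single (p + q) (1:K) : LaurentAlg K n)
            = AddMonoidAlgebra.single p 1 * AddMonoidAlgebra.single q 1 := by
          rw [AddMonoidAlgebra.single_mul_single, one_mul]
        rw [hm, hL, hp, hq, ezf_add, AddMonoidAlgebra.single_add]
        ring
      neg_mem' := by
        intro p hp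
        show br (Zgen j) (AddMonoidAlgebra.single (-p) 1) = _
        have huu : (AddMonoidAlgebra.single p (1:K) : LaurentAlg K n)
            * AddMonoidAlgebra.single (-p) 1 = 1 := by
          rw [AddMonoidAlgebra.single_mul_single, one_mul, add_neg_cancel,
            ← AddMonoidAlgebra.one_def]
        have huu' : (AddMonoidAlgebra.single (-p) (1:K) : LaurentAlg K n)
            * AddMonoidAlgebra.single p 1 = 1 := by
          rw [AddMonoidAlgebra.single_mul_single, one_mul, neg_add_cancel,
            ← AddMonoidAlgebra.one_def]
        have e1 := hL (Zgen j) (AddMonoidAlgebra.single p 1) (AddMonoidAlgebra.single (-p) 1)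
        rw [huu, h1, hp] at e1
        -- e1 : 0 = sp * br Z (s(-p)) + s(-p) * (C * (Z * sp))
        have e2 : (AddMonoidAlgebra.single p (1:K) : LaurentAlg K n)
            * br (Zgen j) (AddMonoidAlgebra.single (-p) 1)
            = -(AddMonoidAlgebra.single (0 : Gn n) (ezf (K := K) c j p) * Zgen j) := by
          have := e1.symm
          have e3 : (AddMonoidAlgebra.single (-p) (1:K) : LaurentAlg K n)
              * (AddMonoidAlgebra.single (0 : Gn n) (ezf (K := K) c j p)
                * (Zgen j * AddMonoidAlgebra.single p 1))
              = AddMonoidAlgebra.single (0 : Gn n) (ezf (K := K) c j p) * Zgen j := by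
            calc (AddMonoidAlgebra.single (-p) (1:K) : LaurentAlg K n)
                * (AddMonoidAlgebra.single (0 : Gn n) (ezf (K := K) c j p)
                  * (Zgen j * AddMonoidAlgebra.single p 1))
                = (AddMonoidAlgebra.single (0 : Gn n) (ezf (K := K) c j p) * Zgen j)
                  * (AddMonoidAlgebra.single (-p) 1 * AddMonoidAlgebra.single p 1) := by ring
              _ = _ := by rw [huu', mul_one]
          rw [e3] at this
          linear_combination this
        calc br (Zgen j) (AddMonoidAlgebra.single (-p) 1)
            = (AddMonoidAlgebra.single (-p) (1:K) * AddMonoidAlgebra.single p 1)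
              * br (Zgen j) (AddMonoidAlgebra.single (-p) 1) := by rw [huu', one_mul]
          _ = AddMonoidAlgebra.single (-p) 1
              * (AddMonoidAlgebra.single p 1 * br (Zgen j) (AddMonoidAlgebra.single (-p) 1)) := by
                ring
          _ = AddMonoidAlgebra.single (-p) 1
              * (-(AddMonoidAlgebra.single (0 : Gn n) (ezf (K := K) c j p) * Zgen j)) := by
                rw [e2]
          _ = _ := by
                rw [ezf_neg]
                rw [show (AddMonoidAlgebra.single (0 : Gn n) (-(ezf (K := K) c j p)) :
                  LaurentAlg K n) = -AddMonoidAlgebra.single (0 : Gn n) (ezf (K := K) c j p) from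
                  single_neg' _ _]
                ring }
    with hS
  intro p
  refine prod_mem_gen S ?_ ?_ p
  · intro k
    show br (Zgen j) (AddMonoidAlgebra.single ((Pi.single k 1 : Fin n → ℤ), (0:Fin n → ℤ)) 1) = _
    have hXk : (AddMonoidAlgebra.single ((Pi.single k 1 : Fin n → ℤ), (0:Fin n → ℤ)) (1:K) :
        LaurentAlg K n) = Xgen k := rfl
    have hez : ezf (K := K) c j ((Pi.single k 1 : Fin n → ℤ), (0:Fin n → ℤ))
        = -(((if k ≤ j then c j k else 0 : ℤ) : K)) := by
      unfold ezf
      congr 1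
      norm_cast
      rw [Finset.sum_eq_single k]
      · simp [Pi.single_eq_same]
      · intro b _ hbk
        simp [Pi.single_eq_of_ne hbk]
      · intro h; exact absurd (Finset.mem_univ k) h
    rw [hXk, hZX j k, hez]
    by_cases hk : k ≤ j
    · rw [if_pos hk, if_pos hk]
      push_cast
      rw [show (AddMonoidAlgebra.single (0 : Gn n) (-((c j k : ℤ) : K)) : LaurentAlg K n)
        = -AddMonoidAlgebra.single (0 : Gn n) (((c j k : ℤ) : K)) from single_neg' _ _]
      rw [single_zero_intCast]
    · rw [if_neg hk, if_neg hk]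
      simp
  · intro k
    show br (Zgen j) (AddMonoidAlgebra.single ((0:Fin n → ℤ), (Pi.single k 1 : Fin n → ℤ)) 1) = _
    have hZk : (AddMonoidAlgebra.single ((0:Fin n → ℤ), (Pi.single k 1 : Fin n → ℤ)) (1:K) :
        LaurentAlg K n) = Zgen k := rfl
    have hez : ezf (K := K) c j ((0:Fin n → ℤ), (Pi.single k 1 : Fin n → ℤ)) = 0 := by
      unfold ezf; simp
    rw [hZk, hZZ j k, hez]
    simp

include h_anti h_leibniz hZX in
lemma eigenX : ∀ (j : Fin n) (β : Fin n → ℤ),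
    br (Xgen j) (AddMonoidAlgebra.single (((0:Fin n → ℤ), β) : Gn n) 1)
      = AddMonoidAlgebra.single (0 : Gn n) (exf (K := K) c j ((0:Fin n → ℤ), β))
        * (Xgen j * AddMonoidAlgebra.single (((0:Fin n → ℤ), β) : Gn n) 1) := by
  intro j
  have hL := leib2 br h_anti h_leibniz
  have h1 := br_one_right br h_anti h_leibniz
  have hpair : ∀ β γ : Fin n → ℤ, (((0:Fin n → ℤ), β) : Gn n) + ((0:Fin n → ℤ), γ)
      = ((0:Fin n → ℤ), β + γ) := by
    intro β γ; rw [Prod.mk_add_mk, add_zero]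
  have hnegpair : ∀ β : Fin n → ℤ, -(((0:Fin n → ℤ), β) : Gn n) = ((0:Fin n → ℤ), -β) := by
    intro β; rw [Prod.neg_mk, neg_zero]
  set S : AddSubgroup (Fin n → ℤ) :=
    { carrier := {β : Fin n → ℤ | br (Xgen j) (AddMonoidAlgebra.single (((0:Fin n → ℤ), β) : Gn n) 1)
        = AddMonoidAlgebra.single (0 : Gn n) (exf (K := K) c j ((0:Fin n → ℤ), β))
          * (Xgen j * AddMonoidAlgebra.single (((0:Fin n → ℤ), β) : Gn n) 1)}
      zero_mem' := by
        show br (Xgen j) (AddMonoidAlgebra.single (((0:Fin n → ℤ), (0:Fin n → ℤ)) : Gn n) 1) = _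
        have hz : (((0:Fin n → ℤ), (0:Fin n → ℤ)) : Gn n) = (0 : Gn n) := rfl
        rw [hz, ← AddMonoidAlgebra.one_def]
        have : exf (K := K) c j (0 : Gn n) = 0 := by unfold exf; simp
        rw [this, h1 (Xgen j), AddMonoidAlgebra.single_zero, zero_mul]
      add_mem' := by
        intro β γ hβ hγ
        show br (Xgen j) (AddMonoidAlgebra.single (((0:Fin n → ℤ), β + γ) : Gn n) 1) = _
        have hm : (AddMonoidAlgebra.single (((0:Fin n → ℤ), β + γ) : Gn n) (1:K) : LaurentAlg K n)
            = AddMonoidAlgebra.single (((0:Fin n → ℤ), β) : Gn n) 1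
              * AddMonoidAlgebra.single (((0:Fin n → ℤ), γ) : Gn n) 1 := by
          rw [AddMonoidAlgebra.single_mul_single, one_mul, hpair]
        have hea : exf (K := K) c j ((0:Fin n → ℤ), β + γ)
            = exf (K := K) c j ((0:Fin n → ℤ), β) + exf (K := K) c j ((0:Fin n → ℤ), γ) := by
          rw [← hpair, exf_add]
        rw [hm, hL, hβ, hγ, hea, AddMonoidAlgebra.single_add]
        ring
      neg_mem' := by
        intro β hβ
        show br (Xgen j) (AddMonoidAlgebra.single (((0:Fin n → ℤ), -β) : Gn n) 1) = _
        have huu : (AddMonoidAlgebra.single (((0:Fin n → ℤ), β) : Gn n) (1:K) : LaurentAlg K n)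
            * AddMonoidAlgebra.single (((0:Fin n → ℤ), -β) : Gn n) 1 = 1 := by
          rw [AddMonoidAlgebra.single_mul_single, one_mul, hpair, add_neg_cancel]
          rfl
        have huu' : (AddMonoidAlgebra.single (((0:Fin n → ℤ), -β) : Gn n) (1:K) : LaurentAlg K n)
            * AddMonoidAlgebra.single (((0:Fin n → ℤ), β) : Gn n) 1 = 1 := by
          rw [AddMonoidAlgebra.single_mul_single, one_mul, hpair, neg_add_cancel]
          rfl
        have e1 := hL (Xgen j) (AddMonoidAlgebra.single (((0:Fin n → ℤ), β) : Gn n) 1)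
          (AddMonoidAlgebra.single (((0:Fin n → ℤ), -β) : Gn n) 1)
        rw [huu, h1, hβ] at e1
        have e2 : (AddMonoidAlgebra.single (((0:Fin n → ℤ), β) : Gn n) (1:K) : LaurentAlg K n)
            * br (Xgen j) (AddMonoidAlgebra.single (((0:Fin n → ℤ), -β) : Gn n) 1)
            = -(AddMonoidAlgebra.single (0 : Gn n) (exf (K := K) c j ((0:Fin n → ℤ), β))
                * Xgen j) := by
          have := e1.symm
          have e3 : (AddMonoidAlgebra.single (((0:Fin n → ℤ), -β) : Gn n) (1:K) : LaurentAlg K n)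
              * (AddMonoidAlgebra.single (0 : Gn n) (exf (K := K) c j ((0:Fin n → ℤ), β))
                * (Xgen j * AddMonoidAlgebra.single (((0:Fin n → ℤ), β) : Gn n) 1))
              = AddMonoidAlgebra.single (0 : Gn n) (exf (K := K) c j ((0:Fin n → ℤ), β))
                * Xgen j := by
            calc (AddMonoidAlgebra.single (((0:Fin n → ℤ), -β) : Gn n) (1:K) : LaurentAlg K n)
                * (AddMonoidAlgebra.single (0 : Gn n) (exf (K := K) c j ((0:Fin n → ℤ), β))
                  * (Xgen j * AddMonoidAlgebra.single (((0:Fin n → ℤ), β) : Gn n) 1))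
                = (AddMonoidAlgebra.single (0 : Gn n) (exf (K := K) c j ((0:Fin n → ℤ), β))
                    * Xgen j)
                  * (AddMonoidAlgebra.single (((0:Fin n → ℤ), -β) : Gn n) 1
                    * AddMonoidAlgebra.single (((0:Fin n → ℤ), β) : Gn n) 1) := by ring
              _ = _ := by rw [huu', mul_one]
          rw [e3] at this
          linear_combination this
        have hexneg : exf (K := K) c j ((0:Fin n → ℤ), -β)
            = -exf (K := K) c j ((0:Fin n → ℤ), β) := by
          rw [show (((0:Fin n → ℤ), -β) : Gn n) = -(((0:Fin n → ℤ), β) : Gn n) from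
            (hnegpair β).symm, exf_neg]
        calc br (Xgen j) (AddMonoidAlgebra.single (((0:Fin n → ℤ), -β) : Gn n) 1)
            = (AddMonoidAlgebra.single (((0:Fin n → ℤ), -β) : Gn n) (1:K)
                * AddMonoidAlgebra.single (((0:Fin n → ℤ), β) : Gn n) 1)
              * br (Xgen j) (AddMonoidAlgebra.single (((0:Fin n → ℤ), -β) : Gn n) 1) := by
                rw [huu', one_mul]
          _ = AddMonoidAlgebra.single (((0:Fin n → ℤ), -β) : Gn n) 1
              * (AddMonoidAlgebra.single (((0:Fin n → ℤ), β) : Gn n) 1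
                * br (Xgen j) (AddMonoidAlgebra.single (((0:Fin n → ℤ), -β) : Gn n) 1)) := by
                ring
          _ = AddMonoidAlgebra.single (((0:Fin n → ℤ), -β) : Gn n) 1
              * (-(AddMonoidAlgebra.single (0 : Gn n) (exf (K := K) c j ((0:Fin n → ℤ), β))
                * Xgen j)) := by rw [e2]
          _ = _ := by
                rw [hexneg]
                rw [show (AddMonoidAlgebra.single (0 : Gn n)
                  (-(exf (K := K) c j ((0:Fin n → ℤ), β))) : LaurentAlg K n)
                  = -AddMonoidAlgebra.single (0 : Gn n) (exf (K := K) c j ((0:Fin n → ℤ), β)) from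
                  single_neg' _ _]
                ring }
    with hS
  intro β
  refine pi_mem_gen S ?_ β
  intro k
  show br (Xgen j) (AddMonoidAlgebra.single (((0:Fin n → ℤ), (Pi.single k 1 : Fin n → ℤ)) : Gn n) 1) = _
  have hZk : (AddMonoidAlgebra.single (((0:Fin n → ℤ), (Pi.single k 1 : Fin n → ℤ)) : Gn n) (1:K) :
      LaurentAlg K n) = Zgen k := rfl
  have hex : exf (K := K) c j ((0:Fin n → ℤ), (Pi.single k 1 : Fin n → ℤ))
      = (((if j ≤ k then c k j else 0 : ℤ) : K)) := by
    unfold exf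
    congr 1
    rw [Finset.sum_eq_single k]
    · simp [Pi.single_eq_same]
    · intro b _ hbk
      simp [Pi.single_eq_of_ne hbk]
    · intro h; exact absurd (Finset.mem_univ k) h
  rw [hZk, h_anti (Xgen j) (Zgen k), hZX k j, hex]
  by_cases hk : j ≤ k
  · rw [if_pos hk, if_pos hk, single_zero_intCast]
    ring
  · rw [if_neg hk, if_neg hk]
    simp

/-- The operator `x ↦ Z_j⁻¹ {Z_j, x}`. -/
noncomputable def Tz (j : Fin n) (x : LaurentAlg K n) : LaurentAlg K n :=
  AddMonoidAlgebra.single (((0 : Fin n → ℤ), -Pi.single j 1) : Gn n) 1 * br (Zgen j) x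

/-- The operator `x ↦ X_j⁻¹ {X_j, x}`. -/
noncomputable def Tx (j : Fin n) (x : LaurentAlg K n) : LaurentAlg K n :=
  AddMonoidAlgebra.single ((-Pi.single j 1, (0 : Fin n → ℤ)) : Gn n) 1 * br (Xgen j) x

include h_anti h_add in
lemma Tz_add (j : Fin n) (x y : LaurentAlg K n) :
    Tz br j (x + y) = Tz br j x + Tz br j y := by
  unfold Tz
  rw [br_add2 br h_anti h_add, mul_add]

include h_anti h_add in
lemma Tx_add (j : Fin n) (x y : LaurentAlg K n) :
    Tx br j (x + y) = Tx br j x + Tx br j y := by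
  unfold Tx
  rw [br_add2 br h_anti h_add, mul_add]

include h_anti in
lemma Tz_memI (I : Ideal (LaurentAlg K n)) (hP : ∀ a ∈ I, ∀ x, br a x ∈ I)
    (j : Fin n) (a : LaurentAlg K n) (ha : a ∈ I) : Tz br j a ∈ I := by
  unfold Tz
  rw [h_anti (Zgen j) a]
  exact I.mul_mem_left _ (neg_mem (hP a ha (Zgen j)))

include h_anti in
lemma Tx_memI (I : Ideal (LaurentAlg K n)) (hP : ∀ a ∈ I, ∀ x, br a x ∈ I)
    (j : Fin n) (a : LaurentAlg K n) (ha : a ∈ I) : Tx br j a ∈ I := by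
  unfold Tx
  rw [h_anti (Xgen j) a]
  exact I.mul_mem_left _ (neg_mem (hP a ha (Xgen j)))

include h_anti h_smul h_leibniz hZZ hZX in
lemma Tz_diag (j : Fin n) (p : Gn n) (cc : K) :
    Tz br j (AddMonoidAlgebra.single p cc) = ezf (K := K) c j p • AddMonoidAlgebra.single p cc := by
  unfold Tz
  have e0 : (AddMonoidAlgebra.single p cc : LaurentAlg K n)
      = cc • AddMonoidAlgebra.single p 1 := by
    rw [AddMonoidAlgebra.smul_single', mul_one]
  rw [e0, br_smul2 br h_anti h_smul, eigenZ br c h_anti h_leibniz hZZ hZX j p, mul_smul_comm]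
  have hZinvZ : (AddMonoidAlgebra.single (((0 : Fin n → ℤ), -Pi.single j 1) : Gn n) (1:K) :
      LaurentAlg K n) * Zgen j = 1 := by
    rw [Zgen, AddMonoidAlgebra.single_mul_single, one_mul]
    rw [show (((0 : Fin n → ℤ), -Pi.single j 1) : Gn n) + ((0:Fin n → ℤ), Pi.single j 1)
      = (0 : Gn n) from by rw [Prod.mk_add_mk, add_zero, neg_add_cancel]; rfl]
    rw [← AddMonoidAlgebra.one_def]
  rw [show (AddMonoidAlgebra.single (((0 : Fin n → ℤ), -Pi.single j 1) : Gn n) (1:K) :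
      LaurentAlg K n) * (AddMonoidAlgebra.single (0 : Gn n) (ezf (K := K) c j p)
        * (Zgen j * AddMonoidAlgebra.single p 1))
      = (AddMonoidAlgebra.single (((0 : Fin n → ℤ), -Pi.single j 1) : Gn n) (1:K) * Zgen j)
        * (AddMonoidAlgebra.single (0 : Gn n) (ezf (K := K) c j p)
          * AddMonoidAlgebra.single p 1) from by ring]
  rw [hZinvZ, one_mul, single_zero_mul_eq_smul]
  rw [smul_comm, ← e0]

include h_anti h_smul h_leibniz hZX in
lemma Tx_diag (j : Fin n) (p : Gn n) (hp : p.1 = 0) (cc : K) :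
    Tx br j (AddMonoidAlgebra.single p cc) = exf (K := K) c j p • AddMonoidAlgebra.single p cc := by
  have hpe : (((0:Fin n → ℤ), p.2) : Gn n) = p := by
    rw [← hp]
  unfold Tx
  have e0 : (AddMonoidAlgebra.single p cc : LaurentAlg K n)
      = cc • AddMonoidAlgebra.single p 1 := by
    rw [AddMonoidAlgebra.smul_single', mul_one]
  rw [e0, br_smul2 br h_anti h_smul, ← hpe,
    eigenX br c h_anti h_leibniz hZX j p.2, mul_smul_comm]
  have hXinvX : (AddMonoidAlgebra.single ((-Pi.single j 1, (0 : Fin n → ℤ)) : Gn n) (1:K) :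
      LaurentAlg K n) * Xgen j = 1 := by
    rw [Xgen, AddMonoidAlgebra.single_mul_single, one_mul]
    rw [show ((-Pi.single j 1, (0 : Fin n → ℤ)) : Gn n) + ((Pi.single j 1 : Fin n → ℤ), (0:Fin n → ℤ))
      = (0 : Gn n) from by rw [Prod.mk_add_mk, add_zero, neg_add_cancel]; rfl]
    rw [← AddMonoidAlgebra.one_def]
  rw [show (AddMonoidAlgebra.single ((-Pi.single j 1, (0 : Fin n → ℤ)) : Gn n) (1:K) :
      LaurentAlg K n) * (AddMonoidAlgebra.single (0 : Gn n)
          (exf (K := K) c j ((0:Fin n → ℤ), p.2))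
        * (Xgen j * AddMonoidAlgebra.single (((0:Fin n → ℤ), p.2) : Gn n) 1))
      = (AddMonoidAlgebra.single ((-Pi.single j 1, (0 : Fin n → ℤ)) : Gn n) (1:K) * Xgen j)
        * (AddMonoidAlgebra.single (0 : Gn n) (exf (K := K) c j ((0:Fin n → ℤ), p.2))
          * AddMonoidAlgebra.single (((0:Fin n → ℤ), p.2) : Gn n) 1) from by ring]
  rw [hXinvX, one_mul, single_zero_mul_eq_smul]
  rw [smul_comm]

end Eigen

/-- Let `K` be a field of characteristic `0` and consider the Laurent polynomial
Poisson algebra `A° = K[X₁^{±1},…,X_n^{±1},Z₁^{±1},…,Z_n^{±1}]` with Poisson bracket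
satisfying `{Z_j, Z_k} = 0`, `{Z_j, X_k} = -δ_{k≤j} c_{jk} Z_j X_k` with `c_{jk}`
nonzero integers for `k ≤ j`, and `{X_j, X_k}` in the polynomial subalgebra
`K[X₁,…,X_n]`. Then `A°` has no nonzero proper Poisson ideals. -/
theorem stmt_12 {K : Type*} [Field K] [CharZero K] (n : ℕ)
    (br : LaurentAlg K n → LaurentAlg K n → LaurentAlg K n)
    (h_anti : ∀ x y, br x y = - br y x)
    (h_add : ∀ x y z, br (x + y) z = br x z + br y z)
    (h_smul : ∀ (a : K) (x y : LaurentAlg K n), br (a • x) y = a • br x y)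
    (h_leibniz : ∀ x y z, br (x * y) z = x * br y z + y * br x z)
    (h_jacobi : ∀ x y z, br x (br y z) + br y (br z x) + br z (br x y) = 0)
    (c : Fin n → Fin n → ℤ) (hc : ∀ j k : Fin n, k ≤ j → c j k ≠ 0)
    (hZZ : ∀ j k : Fin n, br (Zgen j) (Zgen k) = 0)
    (hZX : ∀ j k : Fin n, br (Zgen j) (Xgen k) =
      if k ≤ j then -(c j k : LaurentAlg K n) * (Zgen j * Xgen k) else 0)
    (hXX : ∀ j k : Fin n, br (Xgen j) (Xgen k) ∈
      Algebra.adjoin K (Set.range (Xgen (K := K) (n := n)))) :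
    ∀ I : Ideal (LaurentAlg K n), (∀ a ∈ I, ∀ x, br a x ∈ I) → I = ⊥ ∨ I = ⊤ := by
  classical
  intro I hP
  by_cases hbot : I = ⊥
  · exact Or.inl hbot
  right
  obtain ⟨a, haI, hane⟩ := (Submodule.ne_bot_iff I).mp hbot
  obtain ⟨p₀, hp₀⟩ := Finsupp.support_nonempty_iff.mpr (AddMonoidAlgebra.coeff_eq_zero.not.mpr hane)
  -- Stage 1: separate the X-exponents using the operators Tz.
  obtain ⟨g, hgI, hgsupp, hgp₀, hge⟩ := multi_split' I (Tz br) (fun j p => ezf (K := K) c j p)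
    (fun j => Tz_add br h_anti h_add j)
    (fun j x hx => Tz_memI br h_anti I hP j x hx)
    Finset.univ a haI
    (fun j _ p _ cc => Tz_diag br c h_anti h_smul h_leibniz hZZ hZX j p cc) p₀
  have hga : g.coeff p₀ ≠ 0 := by rw [hgp₀]; exact Finsupp.mem_support_iff.mp hp₀
  have hfst : ∀ p ∈ g.coeff.support, p.1 = p₀.1 := by
    intro p hp
    have hint : ∀ j : Fin n, (∑ k, if k ≤ j then c j k * (p.1 - p₀.1) k else 0) = 0 := by
      intro j
      have he := hge p hp j (Finset.mem_univ j)
      unfold ezf at he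
      have h2 : ((∑ k, if k ≤ j then c j k * p.1 k else 0 : ℤ) : K)
          = ((∑ k, if k ≤ j then c j k * p₀.1 k else 0 : ℤ) : K) := by
        linear_combination -he
      have h3 := Int.cast_injective (α := K) h2
      have h4 : (∑ k, if k ≤ j then c j k * (p.1 - p₀.1) k else 0)
          = (∑ k, if k ≤ j then c j k * p.1 k else 0)
            - (∑ k, if k ≤ j then c j k * p₀.1 k else 0) := by
        rw [← Finset.sum_sub_distrib]
        apply Finset.sum_congr rfl
        intro k _
        by_cases hk : k ≤ j
        · simp only [hk, if_pos, Pi.sub_apply]; ring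
        · simp [hk]
      rw [h4, h3, sub_self]
    have hz := tri_low c hc (p.1 - p₀.1) hint
    funext i
    have := hz i
    rw [Pi.sub_apply] at this
    omega
  -- Shift so that the X-exponent becomes 0.
  set sh : LaurentAlg K n := AddMonoidAlgebra.single ((-p₀.1, (0:Fin n → ℤ)) : Gn n) 1 with hsh
  set g' := sh * g with hg'
  have hg'I : g' ∈ I := I.mul_mem_left _ hgI
  have hg'app : ∀ p : Gn n, g'.coeff p = g.coeff (((p₀.1, (0:Fin n → ℤ)) : Gn n) + p) := by
    intro p
    rw [hg', hsh, AddMonoidAlgebra.coeff_single_mul_apply, one_mul]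
    congr 1
    rw [show -((-p₀.1, (0:Fin n → ℤ)) : Gn n) = ((p₀.1, (0:Fin n → ℤ)) : Gn n) from by
      rw [Prod.neg_mk, neg_neg, neg_zero]]
  have hg'fst : ∀ p ∈ g'.coeff.support, p.1 = 0 := by
    intro p hp
    have h5 : g.coeff (((p₀.1, (0:Fin n → ℤ)) : Gn n) + p) ≠ 0 := by
      rw [← hg'app]; exact Finsupp.mem_support_iff.mp hp
    have h6 := hfst _ (Finsupp.mem_support_iff.mpr h5)
    have h7 : p₀.1 + p.1 = p₀.1 := by
      rw [show (((p₀.1, (0:Fin n → ℤ)) : Gn n) + p).1 = p₀.1 + p.1 from rfl] at h6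
      exact h6
    funext i
    have := congrFun h7 i
    rw [Pi.add_apply] at this
    simp only [Pi.zero_apply]
    omega
  set p₀' : Gn n := ((0:Fin n → ℤ), p₀.2) with hp₀'
  have hadd₀ : ((p₀.1, (0:Fin n → ℤ)) : Gn n) + p₀' = p₀ := by
    rw [hp₀', Prod.mk_add_mk, add_zero, zero_add]
  have hg'p₀' : g'.coeff p₀' ≠ 0 := by
    rw [hg'app, hadd₀, hgp₀]
    exact Finsupp.mem_support_iff.mp hp₀
  -- Stage 2: separate the Z-exponents using the operators Tx.
  obtain ⟨g2, hg2I, hg2supp, hg2p, hg2e⟩ := multi_split' I (Tx br) (fun j p => exf (K := K) c j p)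
    (fun j => Tx_add br h_anti h_add j)
    (fun j x hx => Tx_memI br h_anti I hP j x hx)
    Finset.univ g' hg'I
    (fun j _ p hp cc => Tx_diag br c h_anti h_smul h_leibniz hZX j p (hg'fst p hp) cc) p₀'
  have hg2fst : ∀ p ∈ g2.coeff.support, p.1 = 0 := fun p hp => hg'fst p (hg2supp hp)
  have hg2snd : ∀ p ∈ g2.coeff.support, p.2 = p₀.2 := by
    intro p hp
    have hint : ∀ j : Fin n, (∑ k, if j ≤ k then c k j * (p.2 - p₀.2) k else 0) = 0 := by
      intro j
      have he := hg2e p hp j (Finset.mem_univ j)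
      unfold exf at he
      have h2 : ((∑ k, if j ≤ k then c k j * p.2 k else 0 : ℤ) : K)
          = ((∑ k, if j ≤ k then c k j * p₀'.2 k else 0 : ℤ) : K) := by
        linear_combination he
      have h3 := Int.cast_injective (α := K) h2
      have h4 : (∑ k, if j ≤ k then c k j * (p.2 - p₀.2) k else 0)
          = (∑ k, if j ≤ k then c k j * p.2 k else 0)
            - (∑ k, if j ≤ k then c k j * p₀'.2 k else 0) := by
        rw [← Finset.sum_sub_distrib]
        apply Finset.sum_congr rfl
        intro k _
        by_cases hk : j ≤ k
        · simp only [hk, if_pos, Pi.sub_apply, hp₀']; ring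
        · simp [hk]
      rw [h4, h3, sub_self]
    have hz := tri_up c hc (p.2 - p₀.2) hint
    funext i
    have := hz i
    rw [Pi.sub_apply] at this
    omega
  have hsub : g2.coeff.support ⊆ {p₀'} := by
    intro p hp
    rw [Finset.mem_singleton]
    have h1 : p.1 = p₀'.1 := by rw [hp₀']; exact hg2fst p hp
    have h2 : p.2 = p₀'.2 := by rw [hp₀']; exact hg2snd p hp
    exact Prod.ext_iff.mpr ⟨h1, h2⟩
  have hg2eq : g2 = AddMonoidAlgebra.single p₀' (g2.coeff p₀') :=
    AddMonoidAlgebra.coeff_injective (Finsupp.support_subset_singleton.mp hsub)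
  have hccne : g2.coeff p₀' ≠ 0 := by rw [hg2p]; exact hg'p₀'
  have hone : (AddMonoidAlgebra.single (-p₀') ((g2.coeff p₀')⁻¹) : LaurentAlg K n)
      * AddMonoidAlgebra.single p₀' (g2.coeff p₀') = 1 := by
    rw [AddMonoidAlgebra.single_mul_single, neg_add_cancel, inv_mul_cancel₀ hccne,
      ← AddMonoidAlgebra.one_def]
  rw [Ideal.eq_top_iff_one, ← hone]
  exact I.mul_mem_left _ (hg2eq ▸ hg2I)
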